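/- A quasi-geodesic metric space (X,d) admits a proper, cobounded quasi-action by a group G if and only if G is finitely generated and quasi-isometric to X (i.e. there are a finite symmetric generating set S of G and a quasi-isometry f : (G,d_S) → (X,d)). -/

import Mathlib

open Metric Filter

/-- A `C`-near-action of a group `G` on a metric space `X`. -/
def IsCNearAction {G X : Type*} [Group G] [MetricSpace X] (C : ℝ) (ψ : G → X → X) : Prop :=
  (∀ x : X, dist (ψ 1 x) x ≤ C) ∧
  ∀ (γ₁ γ₂ : G) (x : X), dist (ψ (γ₁ * γ₂) x) (ψ γ₁ (ψ γ₂ x)) ≤ C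

/-- The word metric on `G` determined by a generating set `S`:
`wordDist S g h` is the least `n` such that `g⁻¹ * h` is a product of `n` elements of `S`. -/
noncomputable def wordDist {G : Type*} [Group G] (S : Set G) (g h : G) : ℝ :=
  ((sInf {n : ℕ | ∃ l : List G, l.length = n ∧ (∀ x ∈ l, x ∈ S) ∧ l.prod = g⁻¹ * h} : ℕ) : ℝ)

/-- `X` is a quasi-geodesic metric space. -/
def IsQuasiGeodesicSpace (X : Type*) [MetricSpace X] : Prop :=
  ∃ L A : ℝ, 1 ≤ L ∧ 0 ≤ A ∧ ∀ x y : X, ∃ (T : ℝ) (c : ℝ → X), 0 ≤ T ∧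
    c 0 = x ∧ c T = y ∧ ∀ s ∈ Set.Icc (0 : ℝ) T, ∀ t ∈ Set.Icc (0 : ℝ) T,
      (1 / L) * |s - t| - A ≤ dist (c s) (c t) ∧ dist (c s) (c t) ≤ L * |s - t| + A

/-- A quasi-action of `G` on `X`: a `C`-near-action by uniform `(K,ε)`-quasi-isometric
embeddings. -/
def IsQuasiAction {G X : Type*} [Group G] [MetricSpace X] (ψ : G → X → X) : Prop :=
  ∃ K ε C : ℝ, 1 ≤ K ∧ 0 ≤ ε ∧ 0 ≤ C ∧ IsCNearAction C ψ ∧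
    ∀ (γ : G) (x₁ x₂ : X),
      (1 / K) * dist x₁ x₂ - ε ≤ dist (ψ γ x₁) (ψ γ x₂) ∧
        dist (ψ γ x₁) (ψ γ x₂) ≤ K * dist x₁ x₂ + ε

/-- The quasi-action `ψ` is cobounded. -/
def IsCoboundedQA {G X : Type*} [Group G] [MetricSpace X] (ψ : G → X → X) : Prop :=
  ∃ (x₀ : X) (R : ℝ), 0 < R ∧ ∀ y : X, ∃ γ : G, dist (ψ γ x₀) y < R

/-- The quasi-action `ψ` is proper. -/
def IsProperQA {G X : Type*} [Group G] [MetricSpace X] (ψ : G → X → X) : Prop :=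
  ∀ R : ℝ, 0 < R → ∃ M : ℕ, ∀ x y : X,
    {γ : G | ∃ z ∈ closedBall x R, ψ γ z ∈ closedBall y R}.encard ≤ (M : ℕ∞)

/-- A quasi-isometry from `(A, dA)` to `(B, dB)`. -/
def IsQuasiIsometryPair {A B : Type*} (dA : A → A → ℝ) (dB : B → B → ℝ)
    (f : A → B) : Prop :=
  ∃ K ε C : ℝ, 1 ≤ K ∧ 0 ≤ ε ∧ 0 ≤ C ∧
    (∀ a₁ a₂ : A, (1 / K) * dA a₁ a₂ - ε ≤ dB (f a₁) (f a₂) ∧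
      dB (f a₁) (f a₂) ≤ K * dA a₁ a₂ + ε) ∧
    ∀ b : B, ∃ a : A, dB b (f a) ≤ C

section Word
variable {G : Type*} [Group G] {S : Set G}

lemma wordDist_nonneg (S : Set G) (g h : G) : 0 ≤ wordDist S g h := Nat.cast_nonneg _

lemma wordDist_le_length (g h : G) (l : List G)
    (hl : ∀ x ∈ l, x ∈ S) (hp : l.prod = g⁻¹ * h) :
    wordDist S g h ≤ l.length := by
  have hm : l.length ∈ {n : ℕ | ∃ l' : List G, l'.length = n ∧ (∀ x ∈ l', x ∈ S) ∧
      l'.prod = g⁻¹ * h} := ⟨l, rfl, hl, hp⟩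
  unfold wordDist
  exact_mod_cast Nat.sInf_le hm

lemma wordDist_exists (hgen : ∀ g : G, ∃ l : List G, (∀ x ∈ l, x ∈ S) ∧ l.prod = g)
    (g h : G) : ∃ l : List G, (∀ x ∈ l, x ∈ S) ∧ l.prod = g⁻¹ * h ∧
      (l.length : ℝ) = wordDist S g h := by
  obtain ⟨l, hl, hp⟩ := hgen (g⁻¹ * h)
  have hne : {n : ℕ | ∃ l' : List G, l'.length = n ∧ (∀ x ∈ l', x ∈ S) ∧
      l'.prod = g⁻¹ * h}.Nonempty := ⟨l.length, l, rfl, hl, hp⟩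
  obtain ⟨l', hlen, hl', hp'⟩ := Nat.sInf_mem hne
  exact ⟨l', hl', hp', by rw [hlen]; rfl⟩

lemma wordDist_mul_left (S : Set G) (k g h : G) :
    wordDist S (k * g) (k * h) = wordDist S g h := by
  have h1 : (k * g)⁻¹ * (k * h) = g⁻¹ * h := by group
  unfold wordDist
  rw [h1]

lemma wordDist_one_left (S : Set G) (a b : G) :
    wordDist S 1 (a⁻¹ * b) = wordDist S a b := by
  unfold wordDist
  norm_num

lemma wordDist_triangle (hgen : ∀ g : G, ∃ l : List G, (∀ x ∈ l, x ∈ S) ∧ l.prod = g)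
    (a b c : G) : wordDist S a c ≤ wordDist S a b + wordDist S b c := by
  obtain ⟨l₁, h₁, p₁, e₁⟩ := wordDist_exists hgen a b
  obtain ⟨l₂, h₂, p₂, e₂⟩ := wordDist_exists hgen b c
  have key := wordDist_le_length (S := S) a c (l₁ ++ l₂)
    (fun x hx => by rcases List.mem_append.mp hx with h | h; exacts [h₁ x h, h₂ x h])
    (by rw [List.prod_append, p₁, p₂]; group)
  rw [List.length_append] at key
  push_cast at key
  linarith

lemma ballSet_finite (hS : S.Finite) (n : ℕ) :
    {g : G | ∃ l : List G, (∀ x ∈ l, x ∈ S) ∧ l.prod = g ∧ l.length ≤ n}.Finite := by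
  induction n with
  | zero =>
    apply Set.Finite.subset (Set.finite_singleton (1 : G))
    rintro g ⟨l, -, hp, hlen⟩
    have hnil : l = [] := List.length_eq_zero_iff.mp (Nat.le_zero.mp hlen)
    simp [hnil] at hp
    simp [← hp]
  | succ n ih =>
    apply Set.Finite.subset (ih.union (hS.image2 (· * ·) ih))
    rintro g ⟨l, hl, hp, hlen⟩
    match l with
    | [] => exact Or.inl ⟨[], by simp, by simpa using hp, by simp⟩
    | a :: t =>
      refine Or.inr ⟨a, hl a (by simp), t.prod,
        ⟨t, fun x hx => hl x (by simp [hx]), rfl, ?_⟩, ?_⟩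
      · have : t.length + 1 ≤ n + 1 := by simpa using hlen
        omega
      · simpa using hp

lemma wordBall_finite (hS : S.Finite)
    (hgen : ∀ g : G, ∃ l : List G, (∀ x ∈ l, x ∈ S) ∧ l.prod = g) (r : ℝ) :
    {g : G | wordDist S 1 g ≤ r}.Finite := by
  apply Set.Finite.subset (ballSet_finite hS ⌈r⌉₊)
  rintro g hg
  obtain ⟨l, hl, hp, hlen⟩ := wordDist_exists hgen 1 g
  refine ⟨l, hl, by simpa using hp, ?_⟩
  have h1 : (l.length : ℝ) ≤ r := by rw [hlen]; exact hg
  have h2 : r ≤ (⌈r⌉₊ : ℝ) := Nat.le_ceil r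
  exact_mod_cast h1.trans h2

lemma gen_of_closure (hsymm : ∀ s ∈ S, s⁻¹ ∈ S) (hcl : Subgroup.closure S = ⊤) :
    ∀ g : G, ∃ l : List G, (∀ x ∈ l, x ∈ S) ∧ l.prod = g := by
  intro g
  have hg : g ∈ (Subgroup.closure S).toSubmonoid := by rw [hcl]; trivial
  rw [Subgroup.closure_toSubmonoid] at hg
  obtain ⟨l, hl, hp⟩ := Submonoid.exists_list_of_mem_closure hg
  refine ⟨l, fun x hx => ?_, hp⟩
  rcases hl x hx with h | h
  · exact h
  · simpa using hsymm _ h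

lemma mul_helper {K a b : ℝ} (hK : 0 < K) (h : (1 / K) * a ≤ b) : a ≤ K * b := by
  have h2 := mul_le_mul_of_nonneg_left h hK.le
  rwa [show K * ((1 / K) * a) = a by field_simp] at h2

lemma one_div_mul_le_of_le {K a b : ℝ} (hK : 0 < K) (h : a ≤ K * b) : (1 / K) * a ≤ b := by
  rw [one_div, inv_mul_le_iff₀ hK]
  exact h

end Word

theorem backward {G X : Type*} [Group G] [MetricSpace X]
    (S : Set G) (hSfin : S.Finite) (hsymm : ∀ s ∈ S, s⁻¹ ∈ S)
    (hcl : Subgroup.closure S = ⊤) (f : G → X)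
    (hf : IsQuasiIsometryPair (wordDist S) dist f) :
    ∃ ψ : G → X → X, IsQuasiAction ψ ∧ IsProperQA ψ ∧ IsCoboundedQA ψ := by
  obtain ⟨K, ε, C, hK, hε, hC, hqi, hco⟩ := hf
  have hK0 : (0 : ℝ) < K := lt_of_lt_of_le one_pos hK
  have hgen := gen_of_closure hsymm hcl
  choose g₀ hg₀ using hco
  -- hg₀ : ∀ b, dist b (f (g₀ b)) ≤ C
  set ψ : G → X → X := fun γ x => f (γ * g₀ x) with hψ
  -- wordDist upper bound from dist
  have hwd_le : ∀ a b : G, wordDist S a b ≤ K * (dist (f a) (f b) + ε) := by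
    intro a b
    have h1 := (hqi a b).1
    exact mul_helper hK0 (by linarith)
  have hd_le : ∀ a b : G, dist (f a) (f b) ≤ K * wordDist S a b + ε := fun a b => (hqi a b).2
  -- near-action constant
  have key : ∀ (γ₁ : G) (a : G), dist (f (γ₁ * a)) (f (γ₁ * g₀ (f a))) ≤ K * (K * (C + ε)) + ε := by
    intro γ₁ a
    have h1 : wordDist S a (g₀ (f a)) ≤ K * (C + ε) := by
      have := hwd_le a (g₀ (f a))
      have h2 := hg₀ (f a)
      nlinarith
    have h3 : wordDist S (γ₁ * a) (γ₁ * g₀ (f a)) ≤ K * (C + ε) := by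
      rwa [wordDist_mul_left]
    have h4 := hd_le (γ₁ * a) (γ₁ * g₀ (f a))
    nlinarith
  have htCε : (0 : ℝ) ≤ C + ε := by linarith
  have h9 : (0 : ℝ) ≤ K * (K * (C + ε)) := mul_nonneg hK0.le (mul_nonneg hK0.le htCε)
  have h10 : C + ε ≤ K * (K * (C + ε)) := by
    have ha : C + ε ≤ K * (C + ε) := le_mul_of_one_le_left htCε hK
    have hb : K * (C + ε) ≤ K * (K * (C + ε)) :=
      le_mul_of_one_le_left (mul_nonneg hK0.le htCε) hK
    linarith
  have hKsq : (1 : ℝ) ≤ K * K := by nlinarith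
  refine ⟨ψ, ⟨K * K, K * K * (2 * C + ε) + ε + (2 * C + 2 * ε), K * (K * (C + ε)) + ε,
    hKsq, by nlinarith, by linarith, ⟨?_, ?_⟩, ?_⟩, ?_, ?_⟩
  · -- dist (ψ 1 x) x ≤ C'
    intro x
    have h1 := hg₀ x
    have : ψ 1 x = f (g₀ x) := by rw [hψ]; simp
    rw [this, dist_comm]
    linarith
  · -- near-action
    intro γ₁ γ₂ x
    have h1 : ψ (γ₁ * γ₂) x = f (γ₁ * (γ₂ * g₀ x)) := by rw [hψ]; simp [mul_assoc]
    have h2 : ψ γ₁ (ψ γ₂ x) = f (γ₁ * g₀ (f (γ₂ * g₀ x))) := rfl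
    rw [h1, h2]
    exact key γ₁ (γ₂ * g₀ x)
  · -- QI embeddings
    intro γ x₁ x₂
    have hKK : (0 : ℝ) < K * K := by positivity
    set w : ℝ := wordDist S (g₀ x₁) (g₀ x₂) with hw
    have hw0 : 0 ≤ w := wordDist_nonneg _ _ _
    have e1 : dist (f (g₀ x₁)) (f (g₀ x₂)) ≤ dist x₁ x₂ + 2 * C := by
      have := hg₀ x₁; have := hg₀ x₂
      have t1 := dist_triangle (f (g₀ x₁)) x₁ (f (g₀ x₂))
      have t2 := dist_triangle x₁ x₂ (f (g₀ x₂))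
      rw [dist_comm (f (g₀ x₁)) x₁] at t1
      linarith
    have e2 : dist x₁ x₂ ≤ dist (f (g₀ x₁)) (f (g₀ x₂)) + 2 * C := by
      have := hg₀ x₁; have := hg₀ x₂
      have t1 := dist_triangle x₁ (f (g₀ x₁)) x₂
      have t2 := dist_triangle (f (g₀ x₁)) (f (g₀ x₂)) x₂
      rw [dist_comm (f (g₀ x₂)) x₂] at t2
      linarith
    have hwu : w ≤ K * (dist x₁ x₂ + 2 * C + ε) := by
      have := hwd_le (g₀ x₁) (g₀ x₂); nlinarith
    have hwl : dist x₁ x₂ ≤ K * w + ε + 2 * C := by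
      have := hd_le (g₀ x₁) (g₀ x₂); linarith
    have hψd : ψ γ x₁ = f (γ * g₀ x₁) := rfl
    have hψd2 : ψ γ x₂ = f (γ * g₀ x₂) := rfl
    have hinv : wordDist S (γ * g₀ x₁) (γ * g₀ x₂) = w := wordDist_mul_left S γ _ _
    constructor
    · -- lower bound
      have h1 := (hqi (γ * g₀ x₁) (γ * g₀ x₂)).1
      rw [hinv] at h1
      have h2 : w ≤ K * (dist (ψ γ x₁) (ψ γ x₂) + ε) := mul_helper hK0 (by rw [hψd, hψd2]; linarith)
      apply sub_le_iff_le_add.mpr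
      apply one_div_mul_le_of_le hKK
      have hd0 : (0 : ℝ) ≤ dist (ψ γ x₁) (ψ γ x₂) := dist_nonneg
      have h2' : K * w ≤ K * (K * (dist (ψ γ x₁) (ψ γ x₂) + ε)) :=
        mul_le_mul_of_nonneg_left h2 hK0.le
      nlinarith [mul_nonneg (mul_nonneg hK0.le hK0.le) hd0,
        mul_nonneg (mul_nonneg (mul_nonneg (mul_nonneg hK0.le hK0.le) hK0.le) hK0.le)
          (by linarith : (0:ℝ) ≤ 2 * C + ε),
        mul_nonneg (by linarith : (0:ℝ) ≤ K * K - 1) (by linarith : (0:ℝ) ≤ 2 * C + 2 * ε)]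
    · have h1 := (hqi (γ * g₀ x₁) (γ * g₀ x₂)).2
      rw [hinv] at h1
      rw [hψd, hψd2]
      nlinarith
  · -- proper
    intro R hR
    set r : ℝ := K * (2 * C + R + ε) + K * (R + C + ε) with hr
    have hfin : {g : G | wordDist S 1 g ≤ r}.Finite := wordBall_finite hSfin hgen r
    refine ⟨hfin.toFinset.card, fun x y => ?_⟩
    set P : Set G := {γ : G | ∃ z ∈ closedBall x R, ψ γ z ∈ closedBall y R} with hP
    set φ : G → G := fun γ => (γ * g₀ x)⁻¹ * g₀ y with hφ
    have hinjOn : Set.InjOn φ P := by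
      intro a _ b _ hab
      simp only [hφ] at hab
      have h1 : (a * g₀ x)⁻¹ = (b * g₀ x)⁻¹ := mul_right_cancel hab
      exact mul_right_cancel (inv_injective h1)
    have himg : φ '' P ⊆ {g : G | wordDist S 1 g ≤ r} := by
      rintro - ⟨γ, ⟨z, hz, hγz⟩, rfl⟩
      rw [Metric.mem_closedBall] at hz hγz
      have hd1 : dist (f (g₀ x)) (f (g₀ z)) ≤ 2 * C + R := by
        have hx' := hg₀ x; have hz' := hg₀ z
        have t1 := dist_triangle (f (g₀ x)) x (f (g₀ z))
        have t2 := dist_triangle x z (f (g₀ z))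
        rw [dist_comm (f (g₀ x)) x] at t1
        rw [dist_comm z x] at hz
        linarith
      have t1 : wordDist S (γ * g₀ x) (γ * g₀ z) ≤ K * (2 * C + R + ε) := by
        rw [wordDist_mul_left]
        have := hwd_le (g₀ x) (g₀ z)
        nlinarith
      have t2 : wordDist S (γ * g₀ z) (g₀ y) ≤ K * (R + C + ε) := by
        have hd2 : dist (f (γ * g₀ z)) (f (g₀ y)) ≤ R + C := by
          have hy' := hg₀ y
          have t3 := dist_triangle (f (γ * g₀ z)) y (f (g₀ y))
          exact t3.trans (by linarith)
        have := hwd_le (γ * g₀ z) (g₀ y)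
        nlinarith
      have tri := wordDist_triangle hgen (γ * g₀ x) (γ * g₀ z) (g₀ y)
      show wordDist S 1 ((γ * g₀ x)⁻¹ * g₀ y) ≤ r
      rw [wordDist_one_left]
      linarith
    calc P.encard = (φ '' P).encard := (hinjOn.encard_image).symm
      _ ≤ {g : G | wordDist S 1 g ≤ r}.encard := Set.encard_mono himg
      _ = (hfin.toFinset.card : ℕ∞) := hfin.encard_eq_coe_toFinset_card
  · -- cobounded
    refine ⟨f 1, K * (K * (C + ε)) + ε + C + 1, by linarith, fun y => ?_⟩
    refine ⟨g₀ y, ?_⟩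
    have h1 : ψ (g₀ y) (f 1) = f (g₀ y * g₀ (f 1)) := rfl
    have h2 := key (g₀ y) 1
    rw [mul_one] at h2
    have h3 := hg₀ y
    rw [dist_comm] at h3
    have := dist_triangle (f (g₀ y * g₀ (f 1))) (f (g₀ y)) y
    rw [h1]
    rw [dist_comm (f (g₀ y * g₀ (f 1))) (f (g₀ y))] at this
    calc dist (f (g₀ y * g₀ (f 1))) y ≤ dist (f (g₀ y)) (f (g₀ y * g₀ (f 1))) + dist (f (g₀ y)) y := by
          rw [dist_comm (f (g₀ y)) (f (g₀ y * g₀ (f 1)))]; exact dist_triangle _ _ _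
      _ < K * (K * (C + ε)) + ε + C + 1 := by linarith

lemma telescope {G : Type*} [Group G] (γf : ℕ → G) (m : ℕ) :
    ((List.range m).map (fun i => (γf i)⁻¹ * γf (i + 1))).prod = (γf 0)⁻¹ * γf m := by
  induction m with
  | zero => simp
  | succ m ih => rw [List.range_succ, List.map_append, List.prod_append, ih]; simp

set_option maxHeartbeats 2000000 in
theorem forward {G X : Type*} [Group G] [MetricSpace X]
    (hX : IsQuasiGeodesicSpace X) (ψ : G → X → X) (hqa : IsQuasiAction ψ)
    (hprop : IsProperQA ψ) (hcb : IsCoboundedQA ψ) :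
    ∃ S : Set G, S.Finite ∧ (∀ s ∈ S, s⁻¹ ∈ S) ∧ Subgroup.closure S = ⊤ ∧
      ∃ f : G → X, IsQuasiIsometryPair (wordDist S) dist f := by
  obtain ⟨K, ε, C, hK, hε, hC, ⟨hone, hmul⟩, hqi⟩ := hqa
  obtain ⟨x₀, R, hR, hco⟩ := hcb
  obtain ⟨L, A, hL, hA, hgeo⟩ := hX
  choose q hq using hco
  have hK0 : (0 : ℝ) < K := lt_of_lt_of_le one_pos hK
  have hL0 : (0 : ℝ) < L := lt_of_lt_of_le one_pos hL
  set D₀ : ℝ := K * (3 * C + 2 * R + L + A + ε) with hD₀def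
  set D : ℝ := K * D₀ + ε + 2 * C with hDdef
  have hD₀0 : 0 < D₀ := by rw [hD₀def]; exact mul_pos hK0 (by linarith)
  have hD0 : 0 < D := by rw [hDdef]; nlinarith
  set S : Set G := {γ : G | dist (ψ γ x₀) x₀ ≤ D ∧ dist (ψ γ⁻¹ x₀) x₀ ≤ D} with hSdef
  -- if the orbit point is D₀-close, γ ∈ S
  have hinS : ∀ γ : G, dist (ψ γ x₀) x₀ ≤ D₀ → γ ∈ S := by
    intro γ hγ
    have h1 : dist (ψ γ⁻¹ (ψ γ x₀)) (ψ γ⁻¹ x₀) ≤ K * D₀ + ε := by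
      have := (hqi γ⁻¹ (ψ γ x₀) x₀).2
      nlinarith
    have h2 : dist (ψ (γ⁻¹ * γ) x₀) (ψ γ⁻¹ (ψ γ x₀)) ≤ C := hmul γ⁻¹ γ x₀
    rw [inv_mul_cancel] at h2
    have h3 : dist (ψ 1 x₀) x₀ ≤ C := hone x₀
    have h4 : dist (ψ γ⁻¹ x₀) x₀ ≤ D := by
      have t1 := dist_triangle (ψ γ⁻¹ x₀) (ψ 1 x₀) x₀
      have t2 := dist_triangle (ψ γ⁻¹ x₀) (ψ γ⁻¹ (ψ γ x₀)) (ψ 1 x₀)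
      linarith [dist_comm (ψ γ⁻¹ x₀) (ψ γ⁻¹ (ψ γ x₀)),
        dist_comm (ψ γ⁻¹ (ψ γ x₀)) (ψ 1 x₀)]
    have hDD : D₀ ≤ D := by rw [hDdef]; nlinarith [mul_le_mul_of_nonneg_right hK hD₀0.le]
    exact ⟨hγ.trans hDD, h4⟩
  -- the word-construction lemma
  have hword : ∀ γ : G, ∃ l : List G, (∀ x ∈ l, x ∈ S) ∧ l.prod = γ ∧
      (l.length : ℝ) ≤ L * dist (ψ γ x₀) x₀ + L * A + 1 := by
    intro γ
    obtain ⟨T, c, hT, hc0, hcT, hcq⟩ := hgeo x₀ (ψ γ x₀)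
    set n : ℕ := ⌈T⌉₊ ⊔ 1 with hndef
    have hn1 : 1 ≤ n := le_max_right _ _
    have hn0 : (0 : ℝ) < n := by exact_mod_cast Nat.lt_of_lt_of_le Nat.zero_lt_one hn1
    have hTn : T ≤ (n : ℝ) := by
      calc T ≤ (⌈T⌉₊ : ℝ) := Nat.le_ceil T
        _ ≤ (n : ℝ) := by exact_mod_cast Nat.le_max_left _ _
    have hnT1 : (n : ℝ) ≤ T + 1 := by
      have h1 : (⌈T⌉₊ : ℝ) ≤ T + 1 := (Nat.ceil_lt_add_one hT).le
      rcases Nat.eq_zero_or_pos ⌈T⌉₊ with h0 | hpos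
      · have : n = 1 := by omega
        rw [this]; norm_num; linarith
      · have : n = ⌈T⌉₊ := by omega
        rw [this]; exact h1
    set γf : ℕ → G := fun i => if i = 0 then 1 else if n ≤ i then γ else q (c (i * T / n))
      with hγf
    have hmemIcc : ∀ i : ℕ, i ≤ n → (i * T / n : ℝ) ∈ Set.Icc (0 : ℝ) T := by
      intro i hi
      constructor
      · positivity
      · rw [div_le_iff₀ hn0]
        have : (i : ℝ) ≤ n := by exact_mod_cast hi
        nlinarith
    have hclose : ∀ i : ℕ, i ≤ n → dist (ψ (γf i) x₀) (c (i * T / n)) ≤ C + R := by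
      intro i hi
      rcases eq_or_ne i 0 with h0 | h0
      · have : γf i = 1 := by rw [hγf]; simp [h0]
        rw [this, h0]
        simp only [Nat.cast_zero, zero_mul, zero_div, hc0]
        linarith [hone x₀]
      · rcases eq_or_ne i n with hn | hn
        · have hgi : γf i = γ := by
            rw [hγf]; simp [h0, hn.ge.trans_eq rfl]
          have harg : ((i : ℝ) * T / n) = T := by
            rw [hn]; field_simp
          rw [hgi, harg, hcT]
          simp
          linarith
        · have hilt : ¬ n ≤ i := by omega
          have hgi : γf i = q (c (i * T / n)) := by rw [hγf]; simp [h0, hilt]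
          rw [hgi]
          have := hq (c (i * T / n))
          linarith
    have hstep : ∀ i : ℕ, i < n → (γf i)⁻¹ * γf (i + 1) ∈ S := by
      intro i hi
      set s : G := (γf i)⁻¹ * γf (i + 1) with hs
      have hmul' : γf i * s = γf (i + 1) := by rw [hs]; group
      have hdc : dist (c (i * T / n)) (c ((i + 1 : ℕ) * T / n)) ≤ L + A := by
        have h1 := (hcq _ (hmemIcc i hi.le) _ (hmemIcc (i + 1) hi)).2
        have heq : (i : ℝ) * T / n - ((i + 1 : ℕ) : ℝ) * T / n = -(T / n) := by
          push_cast; ring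
        rw [heq, abs_neg, abs_of_nonneg (by positivity)] at h1
        have hdiv : T / n ≤ 1 := (div_le_one hn0).mpr hTn
        nlinarith
      have hc1 := hclose i hi.le
      have hc2 := hclose (i + 1) hi
      have horb : dist (ψ (γf (i + 1)) x₀) (ψ (γf i) x₀) ≤ 2 * (C + R) + (L + A) := by
        have t1 := dist_triangle (ψ (γf (i + 1)) x₀) (c ((i + 1 : ℕ) * T / n)) (ψ (γf i) x₀)
        have t2 := dist_triangle (c ((i + 1 : ℕ) * T / n)) (c ((i : ℕ) * T / n)) (ψ (γf i) x₀)
        rw [dist_comm (c ((i + 1 : ℕ) * T / n)) (c ((i : ℕ) * T / n))] at t2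
        rw [dist_comm (c ((i : ℕ) * T / n)) (ψ (γf i) x₀)] at t2
        push_cast at t1 t2 hc1 hc2 hdc ⊢
        linarith
      have h2 : dist (ψ (γf (i + 1)) x₀) (ψ (γf i) (ψ s x₀)) ≤ C := by
        have := hmul (γf i) s x₀
        rwa [hmul'] at this
      have h3 : dist (ψ (γf i) (ψ s x₀)) (ψ (γf i) x₀) ≤ 3 * C + 2 * R + L + A := by
        have t1 := dist_triangle (ψ (γf i) (ψ s x₀)) (ψ (γf (i + 1)) x₀) (ψ (γf i) x₀)
        rw [dist_comm (ψ (γf i) (ψ s x₀)) (ψ (γf (i + 1)) x₀)] at t1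
        linarith
      have h4 := (hqi (γf i) (ψ s x₀) x₀).1
      have h5 : dist (ψ s x₀) x₀ ≤ D₀ := by
        rw [hD₀def]
        exact mul_helper hK0 (by linarith)
      exact hinS s h5
    -- assemble the word
    refine ⟨(List.range n).map (fun i => (γf i)⁻¹ * γf (i + 1)), ?_, ?_, ?_⟩
    · intro x hx
      obtain ⟨i, hi, rfl⟩ := List.mem_map.mp hx
      exact hstep i (List.mem_range.mp hi)
    · rw [telescope]
      have h0 : γf 0 = 1 := by rw [hγf]; simp
      have hn' : γf n = γ := by
        rw [hγf]
        have : n ≠ 0 := by omega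
        simp [this]
      rw [h0, hn']
      group
    · rw [List.length_map, List.length_range]
      have hTd : T ≤ L * dist (ψ γ x₀) x₀ + L * A := by
        have h1 := (hcq 0 (Set.left_mem_Icc.mpr hT) T (Set.right_mem_Icc.mpr hT)).1
        have habs : |(0:ℝ) - T| = T := by rw [abs_sub_comm, sub_zero, abs_of_nonneg hT]
        rw [habs, hc0, hcT] at h1
        have h2 : (1 / L) * T ≤ dist (ψ γ x₀) x₀ + A := by
          linarith [dist_comm x₀ (ψ γ x₀)]
        linarith [mul_helper hL0 h2]
      linarith
  -- S is finite
  obtain ⟨M, hM⟩ := hprop D hD0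
  have hSfin : S.Finite := by
    have hsub : S ⊆ {γ : G | ∃ z ∈ closedBall x₀ D, ψ γ z ∈ closedBall x₀ D} := by
      intro γ hγ
      exact ⟨x₀, Metric.mem_closedBall_self hD0.le, Metric.mem_closedBall.mpr hγ.1⟩
    have hfin : {γ : G | ∃ z ∈ closedBall x₀ D, ψ γ z ∈ closedBall x₀ D}.Finite :=
      (Set.encard_le_coe_iff_finite_ncard_le.mp (hM x₀ x₀)).1
    exact hfin.subset hsub
  have hsymm : ∀ s ∈ S, s⁻¹ ∈ S := by
    intro s hs
    exact ⟨hs.2, by rw [inv_inv]; exact hs.1⟩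
  have hcl : Subgroup.closure S = ⊤ := by
    rw [eq_top_iff]
    intro γ _
    obtain ⟨l, hl, hp, -⟩ := hword γ
    rw [← hp]
    exact Subgroup.list_prod_mem _ (fun x hx => Subgroup.subset_closure (hl x hx))
  have hgen : ∀ g : G, ∃ l : List G, (∀ x ∈ l, x ∈ S) ∧ l.prod = g := fun g =>
    (hword g).imp (fun l hl => ⟨hl.1, hl.2.1⟩)
  refine ⟨S, hSfin, hsymm, hcl, fun γ => ψ γ x₀, ?_⟩
  -- key estimates for the orbit map
  set B₂ : ℝ := C + K * D + ε with hB₂def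
  have hB₂0 : 0 < B₂ := by rw [hB₂def]; nlinarith
  have hup : ∀ l : List G, (∀ x ∈ l, x ∈ S) →
      dist (ψ l.prod x₀) x₀ ≤ l.length * B₂ + C := by
    intro l
    induction l using List.reverseRecOn with
    | nil => intro _; simpa using hone x₀
    | append_singleton l a ih =>
      intro hl
      have hal : ∀ x ∈ l, x ∈ S := fun x hx => hl x (by simp [hx])
      have haS : a ∈ S := hl a (by simp)
      have ih' := ih hal
      have h1 : dist (ψ (l.prod * a) x₀) (ψ l.prod (ψ a x₀)) ≤ C := hmul l.prod a x₀
      have h2 : dist (ψ l.prod (ψ a x₀)) (ψ l.prod x₀) ≤ K * D + ε := by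
        have := (hqi l.prod (ψ a x₀) x₀).2
        have haD : dist (ψ a x₀) x₀ ≤ D := haS.1
        nlinarith
      have t1 := dist_triangle (ψ (l.prod * a) x₀) (ψ l.prod (ψ a x₀)) x₀
      have t2 := dist_triangle (ψ l.prod (ψ a x₀)) (ψ l.prod x₀) x₀
      rw [List.prod_append, List.prod_singleton, List.length_append, List.length_singleton]
      push_cast
      have : dist (ψ (l.prod * a) x₀) x₀ ≤ C + (K * D + ε) + (↑l.length * B₂ + C) := by
        linarith
      rw [hB₂def]
      push_cast at this ⊢
      nlinarith [this]
  -- distance of orbit points controls translates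
  have horb_le : ∀ w : G, ∀ γ₁ : G,
      dist (ψ γ₁ x₀) (ψ (γ₁ * w) x₀) ≤ C + K * dist (ψ w x₀) x₀ + ε := by
    intro w γ₁
    have h1 : dist (ψ (γ₁ * w) x₀) (ψ γ₁ (ψ w x₀)) ≤ C := hmul γ₁ w x₀
    have h2 : dist (ψ γ₁ (ψ w x₀)) (ψ γ₁ x₀) ≤ K * dist (ψ w x₀) x₀ + ε :=
      (hqi γ₁ (ψ w x₀) x₀).2
    have t1 := dist_triangle (ψ γ₁ x₀) (ψ γ₁ (ψ w x₀)) (ψ (γ₁ * w) x₀)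
    linarith [dist_comm (ψ (γ₁ * w) x₀) (ψ γ₁ (ψ w x₀)),
      dist_comm (ψ γ₁ (ψ w x₀)) (ψ γ₁ x₀)]
  have horb_ge : ∀ w : G, ∀ γ₁ : G,
      dist (ψ w x₀) x₀ ≤ K * (dist (ψ γ₁ x₀) (ψ (γ₁ * w) x₀) + C + ε) := by
    intro w γ₁
    have h1 : dist (ψ (γ₁ * w) x₀) (ψ γ₁ (ψ w x₀)) ≤ C := hmul γ₁ w x₀
    have h2 := (hqi γ₁ (ψ w x₀) x₀).1
    have t1 := dist_triangle (ψ γ₁ (ψ w x₀)) (ψ (γ₁ * w) x₀) (ψ γ₁ x₀)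
    apply mul_helper hK0
    have : dist (ψ γ₁ (ψ w x₀)) (ψ γ₁ x₀) ≤ dist (ψ γ₁ x₀) (ψ (γ₁ * w) x₀) + C := by
      linarith [dist_comm (ψ (γ₁ * w) x₀) (ψ γ₁ x₀),
        dist_comm (ψ (γ₁ * w) x₀) (ψ γ₁ (ψ w x₀))]
    linarith [dist_comm (ψ w x₀) x₀, dist_comm (ψ γ₁ (ψ w x₀)) (ψ γ₁ x₀)]
  set K' : ℝ := K * B₂ + L * K + 1 with hK'def
  set ε' : ℝ := (L * K * (C + ε) + L * A + 1) + (K * C + ε + C) with hε'def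
  have hK'1 : 1 ≤ K' := by rw [hK'def]; nlinarith [mul_nonneg hK0.le hB₂0.le, mul_nonneg hL0.le hK0.le]
  have hK'0 : (0:ℝ) < K' := by linarith
  have hε'0 : 0 ≤ ε' := by rw [hε'def]; nlinarith [mul_nonneg (mul_nonneg hL0.le hK0.le) (by linarith : (0:ℝ) ≤ C + ε), mul_nonneg hL0.le hA, mul_nonneg hK0.le hC]
  refine ⟨K', ε', R, hK'1, hε'0, hR.le, fun γ₁ γ₂ => ⟨?_, ?_⟩, fun y => ?_⟩
  · -- lower bound
    set w : G := γ₁⁻¹ * γ₂ with hwdef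
    have hγ₂ : γ₁ * w = γ₂ := by rw [hwdef]; group
    obtain ⟨l, hl, hp, hlen⟩ := hword w
    have hwd : wordDist S γ₁ γ₂ ≤ l.length := wordDist_le_length γ₁ γ₂ l hl hp
    have hd1 : dist (ψ w x₀) x₀ ≤ K * (dist (ψ γ₁ x₀) (ψ γ₂ x₀) + C + ε) := by
      have := horb_ge w γ₁
      rwa [hγ₂] at this
    have hbound : wordDist S γ₁ γ₂ ≤
        L * (K * (dist (ψ γ₁ x₀) (ψ γ₂ x₀) + C + ε)) + L * A + 1 := by
      have := hlen
      nlinarith [mul_le_mul_of_nonneg_left hd1 hL0.le]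
    apply sub_le_iff_le_add.mpr
    apply one_div_mul_le_of_le hK'0
    have hd0 : (0:ℝ) ≤ dist (ψ γ₁ x₀) (ψ γ₂ x₀) := dist_nonneg
    rw [hK'def, hε'def]
    nlinarith [mul_nonneg (mul_nonneg hK0.le hB₂0.le) hd0,
      mul_nonneg (mul_nonneg hL0.le hK0.le) hd0,
      mul_nonneg (mul_nonneg (mul_nonneg hK0.le hB₂0.le) hL0.le) hK0.le]
  · -- upper bound
    set w : G := γ₁⁻¹ * γ₂ with hwdef
    have hγ₂ : γ₁ * w = γ₂ := by rw [hwdef]; group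
    obtain ⟨l, hl, hp, hlen⟩ := wordDist_exists hgen γ₁ γ₂
    have hd1 : dist (ψ l.prod x₀) x₀ ≤ l.length * B₂ + C := hup l hl
    have h2 : dist (ψ γ₁ x₀) (ψ γ₂ x₀) ≤ C + K * (l.length * B₂ + C) + ε := by
      have h3 := horb_le l.prod γ₁
      have h4 : γ₁ * l.prod = γ₂ := by rw [hp]; group
      rw [h4] at h3
      nlinarith
    show dist (ψ γ₁ x₀) (ψ γ₂ x₀) ≤ K' * wordDist S γ₁ γ₂ + ε'
    rw [← hlen]
    rw [hK'def, hε'def]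
    have hl0 : (0:ℝ) ≤ (l.length : ℝ) := Nat.cast_nonneg _
    nlinarith [mul_nonneg (mul_nonneg hL0.le hK0.le) hl0, hl0,
      mul_nonneg (mul_nonneg hL0.le hK0.le) (by linarith : (0:ℝ) ≤ C + ε),
      mul_nonneg hL0.le hA]
  · -- coboundedness of the orbit map
    exact ⟨q y, by linarith [dist_comm (ψ (q y) x₀) y, hq y]⟩


/-- A quasi-geodesic metric space admits a proper cobounded quasi-action by `G`
iff `G` is finitely generated and quasi-isometric to `X`. -/
theorem stmt13 {G X : Type*} [Group G] [MetricSpace X]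
    (hX : IsQuasiGeodesicSpace X) :
    (∃ ψ : G → X → X, IsQuasiAction ψ ∧ IsProperQA ψ ∧ IsCoboundedQA ψ) ↔
      ∃ S : Set G, S.Finite ∧ (∀ s ∈ S, s⁻¹ ∈ S) ∧ Subgroup.closure S = ⊤ ∧
        ∃ f : G → X, IsQuasiIsometryPair (wordDist S) dist f := by
  constructor
  · rintro ⟨ψ, h1, h2, h3⟩
    exact forward hX ψ h1 h2 h3
  · rintro ⟨S, hfin, hsym, hcl, f, hf⟩
    exact backward S hfin hsym hcl f hf
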